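/- Let n ≥ 1 and a, b ∈ Z/nZ. The number of quandle endomorphisms f of the dihedral quandle Z_n^dih with f(0) = 0 and f(a) = b equals gcd(a.val, n) if gcd(a.val, n) divides b.val, and equals 0 otherwise, where a.val, b.val ∈ {0, 1, …, n−1} are the natural-number representatives of a and b. -/
import Mathlib

/-- A quandle endomorphism of the dihedral quandle `Z_n^dih`. -/
def IsDihedralEnd (n : ℕ) (f : ZMod n → ZMod n) : Prop :=
  ∀ x y : ZMod n, f (2 * y - x) = 2 * f y - f x

lemma dihedral_end_linear {n : ℕ} [NeZero n] {f : ZMod n → ZMod n}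
    (hf : IsDihedralEnd n f) (h0 : f 0 = 0) (x : ZMod n) : f x = f 1 * x := by
  have key : ∀ k : ℕ, f (k : ZMod n) = f 1 * (k : ZMod n) := by
    intro k
    induction k using Nat.strong_induction_on with
    | _ k ih =>
      match k with
      | 0 => simpa using h0
      | 1 => simp
      | (m+2) =>
        have h1 := ih (m+1) (by omega)
        have h2 := ih m (by omega)
        have hc : ((m+2 : ℕ) : ZMod n) = 2 * ((m+1 : ℕ) : ZMod n) - (m : ZMod n) := by
          push_cast; ring
        rw [hc, hf, h1, h2]
        push_cast; ring
  conv_lhs => rw [← ZMod.natCast_rightInverse x]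
  rw [key x.val, ZMod.natCast_rightInverse x]

theorem card_end_zero_to_zero (n : ℕ) (hn : 1 ≤ n) (a b : ZMod n) :
    Nat.card {f : ZMod n → ZMod n // IsDihedralEnd n f ∧ f 0 = 0 ∧ f a = b} =
      if Nat.gcd a.val n ∣ b.val then Nat.gcd a.val n else 0 := by
  haveI : NeZero n := ⟨by omega⟩
  set g := Nat.gcd a.val n with hg
  have hgpos : 0 < g := Nat.gcd_pos_of_pos_right _ (by omega)
  have hgn : g ∣ n := Nat.gcd_dvd_right _ _
  have hga : g ∣ a.val := Nat.gcd_dvd_left _ _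
  set m := n / g with hm
  have hmpos : 0 < m := Nat.div_pos (Nat.le_of_dvd (by omega) hgn) hgpos
  have hmg : m * g = n := Nat.div_mul_cancel hgn
  -- reduce to counting c with c * a = b
  have hcard : Nat.card {f : ZMod n → ZMod n // IsDihedralEnd n f ∧ f 0 = 0 ∧ f a = b}
      = Nat.card {c : ZMod n // c * a = b} := by
    refine Nat.card_congr ⟨fun f => ⟨f.1 1, ?_⟩, fun c => ⟨fun x => c.1 * x, ?_, ?_, c.2⟩,
      ?_, ?_⟩
    · rw [← dihedral_end_linear f.2.1 f.2.2.1 a]; exact f.2.2.2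
    · intro x y; ring
    · exact mul_zero _
    · intro f
      refine Subtype.ext (funext fun x => ?_)
      exact (dihedral_end_linear f.2.1 f.2.2.1 x).symm
    · intro c; exact Subtype.ext (mul_one _)
  rw [hcard]
  -- characterization of solutions
  have hsol : ∀ c : ZMod n, c * a = b ↔ c.val * a.val ≡ b.val [MOD n] := by
    intro c
    rw [← ZMod.natCast_eq_natCast_iff]
    push_cast
    rw [ZMod.natCast_rightInverse c, ZMod.natCast_rightInverse a, ZMod.natCast_rightInverse b]
  by_cases hb : g ∣ b.val
  · rw [if_pos hb]
    -- a particular solution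
    set c0 : ZMod n := a⁻¹ * ((b.val / g : ℕ) : ZMod n) with hc0
    have hc0sol : c0 * a = b := by
      have : c0 * a = (a * a⁻¹) * ((b.val / g : ℕ) : ZMod n) := by ring
      rw [this, ZMod.mul_inv_eq_gcd, ← hg, ← Nat.cast_mul,
        Nat.mul_div_cancel' hb, ZMod.natCast_rightInverse b]
    have hcop : Nat.Coprime (a.val / g) m := by
      have := Nat.coprime_div_gcd_div_gcd (m := a.val) (n := n) hgpos
      exact this
    -- the solution set is in bijection with Fin g
    have he : ∀ i : Fin g, (c0 + ((i.1 * m : ℕ) : ZMod n)) * a = b := by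
      intro i
      have hz : (((i.1 * m : ℕ) : ZMod n)) * a = 0 := by
        conv_lhs => rw [← ZMod.natCast_rightInverse a]
        rw [← Nat.cast_mul, ZMod.natCast_eq_zero_iff]
        obtain ⟨a', ha'⟩ := hga
        refine ⟨i.1 * a', ?_⟩
        rw [ha']
        calc i.1 * m * (g * a') = (m * g) * (i.1 * a') := by ring
        _ = n * (i.1 * a') := by rw [hmg]
      rw [add_mul, hz, add_zero, hc0sol]
    refine (Nat.card_eq_of_bijective (fun i : Fin g => (⟨c0 + ((i.1 * m : ℕ) : ZMod n), he i⟩ :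
        {c : ZMod n // c * a = b})) ⟨?_, ?_⟩).symm.trans (by simp)
    · intro i j hij
      have h1 : ((i.1 * m : ℕ) : ZMod n) = ((j.1 * m : ℕ) : ZMod n) := by
        have := congrArg (fun c : {c : ZMod n // c * a = b} => c.1) hij
        simpa using this
      rw [ZMod.natCast_eq_natCast_iff, Nat.ModEq] at h1
      have hi : i.1 * m < n := by
        calc i.1 * m < g * m := (Nat.mul_lt_mul_right hmpos).mpr i.2
        _ = n := by rw [mul_comm]; exact hmg
      have hj : j.1 * m < n := by
        calc j.1 * m < g * m := (Nat.mul_lt_mul_right hmpos).mpr j.2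
        _ = n := by rw [mul_comm]; exact hmg
      rw [Nat.mod_eq_of_lt hi, Nat.mod_eq_of_lt hj] at h1
      exact Fin.ext (Nat.eq_of_mul_eq_mul_right hmpos h1)
    · rintro ⟨c, hc⟩
      -- c - c0 annihilates a
      have hd : (c - c0) * a = 0 := by
        rw [sub_mul, hc, hc0sol, sub_self]
      have hdval : n ∣ (c - c0).val * a.val := by
        rw [← ZMod.natCast_eq_zero_iff, Nat.cast_mul,
          ZMod.natCast_rightInverse (c - c0), ZMod.natCast_rightInverse a]
        exact hd
      have hmd : m ∣ (c - c0).val := by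
        obtain ⟨a', ha'⟩ := hga
        have ha'' : a.val / g = a' := by rw [ha']; exact Nat.mul_div_cancel_left _ hgpos
        have h2 : m * g ∣ (c - c0).val * (g * a') := by rw [hmg, ← ha']; exact hdval
        have h3 : m ∣ (c - c0).val * a' := by
          rcases h2 with ⟨t, ht⟩
          refine ⟨t, ?_⟩
          have : g * ((c - c0).val * a') = g * (m * t) := by
            calc g * ((c - c0).val * a') = (c - c0).val * (g * a') := by ring
            _ = m * g * t := ht
            _ = g * (m * t) := by ring
          exact Nat.eq_of_mul_eq_mul_left hgpos this
        have hcop' : Nat.Coprime m a' := by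
          rw [← ha'']; exact (hcop.symm)
        exact (Nat.Coprime.dvd_of_dvd_mul_right hcop' h3)
      obtain ⟨j, hj⟩ := hmd
      have hjlt : j < g := by
        have hlt : m * j < m * g := by rw [hmg, ← hj]; exact ZMod.val_lt _
        exact Nat.lt_of_mul_lt_mul_left hlt
      refine ⟨⟨j, hjlt⟩, ?_⟩
      refine Subtype.ext ?_
      show c0 + ((j * m : ℕ) : ZMod n) = c
      have : ((j * m : ℕ) : ZMod n) = c - c0 := by
        rw [mul_comm, ← hj, ZMod.natCast_rightInverse (c - c0)]
      rw [this]; ring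
  · rw [if_neg hb]
    have : IsEmpty {c : ZMod n // c * a = b} := by
      refine ⟨fun c => hb ?_⟩
      have h1 := (hsol c.1).mp c.2
      have h2 : c.1.val * a.val ≡ b.val [MOD g] := h1.of_dvd hgn
      have h3 : c.1.val * a.val ≡ 0 [MOD g] := by
        rcases hga with ⟨a', ha'⟩
        have : g ∣ (↑c : ZMod n).val * a.val := ⟨(↑c : ZMod n).val * a', by rw [ha']; ring⟩
        exact Nat.modEq_zero_iff_dvd.mpr this
      exact Nat.modEq_zero_iff_dvd.mp (h3.symm.trans h2).symm
    simp [Nat.card_of_isEmpty]
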